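/- Let ζ and ψ be Young functions such that ψ̃(x) = ψ(x)/x is strictly increasing with ψ̃(0) = 0 and ψ̃(∞) = ∞. Define κ by κ^{-1}(x) = ζ^{-1}(x)·ψ̃^{-1}(x) and let ϑ = κ^{-1} ∘ ψ̃. Then there exist constants K, x₀ ∈ (0,∞) such that K^{-1}x ≤ (ϑ*)^{-1}(x)·ψ̃^{-1}(κ(x)) ≤ 2x for all x ≥ x₀. -/
import Mathlib

open Filter Topology MeasureTheory
open scoped ENNReal
noncomputable section

/-- A Young function: strictly increasing, convex on `[0,∞)`, vanishing at `0`. -/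
def IsYoung (f : ℝ → ℝ) : Prop :=
  StrictMonoOn f (Set.Ici 0) ∧ ConvexOn ℝ (Set.Ici 0) f ∧ f 0 = 0

/-- Legendre transform of a real function (sup over `y ≥ 0`), `ℝ≥0∞`-valued. -/
def Leg (f : ℝ → ℝ) (x : ℝ) : ℝ≥0∞ :=
  ⨆ y : {y : ℝ // 0 ≤ y}, ENNReal.ofReal (x * y - f y)

/-- Legendre transform of an `ℝ≥0∞`-valued function. -/
def LegE (f : ℝ → ℝ≥0∞) (x : ℝ) : ℝ≥0∞ :=
  ⨆ y : {y : ℝ // 0 ≤ y}, (ENNReal.ofReal (x * y) - f y)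

/-- Monotone extension of a real function on `[0,∞)` to `ℝ≥0∞` arguments. -/
def extE (f : ℝ → ℝ) (t : ℝ≥0∞) : ℝ≥0∞ :=
  ⨆ s : {s : ℝ // 0 ≤ s ∧ ENNReal.ofReal s ≤ t}, ENNReal.ofReal (f s)

/-- Monotone extension of an `ℝ≥0∞`-valued function to `ℝ≥0∞` arguments. -/
def extLT (f : ℝ → ℝ≥0∞) (t : ℝ≥0∞) : ℝ≥0∞ :=
  ⨆ s : {s : ℝ // 0 ≤ s ∧ ENNReal.ofReal s ≤ t}, f s

/-- Generalized (right-continuous) inverse of an `ℝ≥0∞`-valued function. -/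
def invE (g : ℝ → ℝ≥0∞) (t : ℝ≥0∞) : ℝ≥0∞ :=
  ⨅ s : {s : ℝ // 0 ≤ s ∧ t ≤ g s}, ENNReal.ofReal s

/-- `ρ(x) = sup_{y ≥ 0} (φ(xy) - ψ(y))/y`. -/
def rhoSup (φ ψ : ℝ → ℝ) (x : ℝ) : ℝ≥0∞ :=
  ⨆ y : {y : ℝ // 0 ≤ y}, ENNReal.ofReal ((φ (x * y) - ψ y) / y)

/-- `ζ(x) = sup_{y ≥ 0} (φ(xy) - ψ(y)/y)`. -/
def zetaSup (φ ψ : ℝ → ℝ) (x : ℝ) : ℝ≥0∞ :=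
  ⨆ y : {y : ℝ // 0 ≤ y}, ENNReal.ofReal (φ (x * y) - ψ y / y)

/-- Domination order on real functions: `f(x) ≤ C₁ g(C₂ x)` for large `x`. -/
def DominR (f g : ℝ → ℝ) : Prop :=
  ∃ C₁ C₂ x₀ : ℝ, 0 < C₁ ∧ 0 < C₂ ∧ 0 < x₀ ∧ ∀ x ≥ x₀, f x ≤ C₁ * g (C₂ * x)

/-- Equivalence of real functions: mutual domination. -/
def EquivR (f g : ℝ → ℝ) : Prop := DominR f g ∧ DominR g f

/-- Domination order on `ℝ≥0∞`-valued functions. -/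
def DominE (f g : ℝ → ℝ≥0∞) : Prop :=
  ∃ C₁ C₂ x₀ : ℝ, 0 < C₁ ∧ 0 < C₂ ∧ 0 < x₀ ∧
    ∀ x ≥ x₀, f x ≤ ENNReal.ofReal C₁ * g (C₂ * x)

/-- Equivalence of `ℝ≥0∞`-valued functions: mutual domination. -/
def EquivE (f g : ℝ → ℝ≥0∞) : Prop := DominE f g ∧ DominE g f

/-- With κ⁻¹(x) = ζ⁻¹(x)ψ̃⁻¹(x) and ϑ = κ⁻¹ ∘ ψ̃, there are K, x₀ ∈ (0,∞) with
K⁻¹x ≤ (ϑ*)⁻¹(x)·ψ̃⁻¹(κ(x)) ≤ 2x for x ≥ x₀. -/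
theorem stmt7 (ζ ψ ζinv tψinv κ κinv : ℝ → ℝ)
    (hζ : IsYoung ζ) (hψ : IsYoung ψ)
    (htψ : StrictMonoOn (fun x => ψ x / x) (Set.Ici 0))
    (htψ0 : ψ 0 / 0 = 0)
    (htψi : Tendsto (fun x => ψ x / x) atTop atTop)
    (hζinv : ∀ x ≥ (0:ℝ), 0 ≤ ζinv x ∧ ζ (ζinv x) = x)
    (htinv : ∀ x ≥ (0:ℝ), 0 ≤ tψinv x ∧ ψ (tψinv x) / tψinv x = x)
    (hκinv : ∀ x ≥ (0:ℝ), κinv x = ζinv x * tψinv x)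
    (hκ : ∀ x ≥ (0:ℝ), 0 ≤ κ x ∧ κinv (κ x) = x ∧ κ (κinv x) = x) :
    ∃ K x₀ : ℝ, 0 < K ∧ 0 < x₀ ∧ ∀ x ≥ x₀,
      ENNReal.ofReal (K⁻¹ * x) ≤
        invE (Leg (fun t => κinv (ψ t / t))) (ENNReal.ofReal x) *
          ENNReal.ofReal (tψinv (κ x)) ∧
      invE (Leg (fun t => κinv (ψ t / t))) (ENNReal.ofReal x) *
          ENNReal.ofReal (tψinv (κ x)) ≤ ENNReal.ofReal (2 * x) := by
  set ϑ : ℝ → ℝ := fun t => κinv (ψ t / t) with hϑdef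
  -- basic facts
  have hptnn : ∀ y : ℝ, 0 ≤ y → 0 ≤ ψ y / y := by
    intro y hy
    rcases eq_or_lt_of_le hy with h | h
    · rw [← h, htψ0]
    · have := htψ (Set.mem_Ici.2 le_rfl) (Set.mem_Ici.2 hy) h
      simp only [htψ0] at this
      exact this.le
  have htψinvL : ∀ y : ℝ, 0 ≤ y → tψinv (ψ y / y) = y := by
    intro y hy
    have h1 := htinv (ψ y / y) (hptnn y hy)
    exact htψ.injOn (Set.mem_Ici.2 h1.1) (Set.mem_Ici.2 hy) h1.2
  have hζinvmono : ∀ u v : ℝ, 0 ≤ u → u ≤ v → ζinv u ≤ ζinv v := by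
    intro u v hu huv
    by_contra h
    push_neg at h
    have hv : (0:ℝ) ≤ v := le_trans hu huv
    have := hζ.1 (Set.mem_Ici.2 (hζinv v hv).1) (Set.mem_Ici.2 (hζinv u hu).1) h
    rw [(hζinv u hu).2, (hζinv v hv).2] at this
    exact absurd huv (not_le.2 this)
  have hϑform : ∀ y : ℝ, 0 ≤ y → ϑ y = ζinv (ψ y / y) * y := by
    intro y hy
    simp only [hϑdef]
    rw [hκinv (ψ y / y) (hptnn y hy), htψinvL y hy]
  have hϑnn : ∀ y : ℝ, 0 ≤ y → 0 ≤ ϑ y := by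
    intro y hy
    rw [hϑform y hy]
    exact mul_nonneg (hζinv _ (hptnn y hy)).1 hy
  refine ⟨1, 1, one_pos, one_pos, fun x hx => ?_⟩
  have hx0 : (0:ℝ) < x := lt_of_lt_of_le one_pos hx
  have hκx : 0 ≤ κ x := (hκ x hx0.le).1
  set a : ℝ := tψinv (κ x) with ha_def
  have ha0 : 0 ≤ a := (htinv (κ x) hκx).1
  have hpta : ψ a / a = κ x := (htinv (κ x) hκx).2
  have hϑa : ϑ a = x := by
    simp only [hϑdef]
    rw [hpta, (hκ x hx0.le).2.1]
  have hapos : 0 < a := by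
    rcases eq_or_lt_of_le ha0 with h | h
    · exfalso
      have hκx0 : κ x = 0 := by rw [← hpta, ← h, htψ0]
      have hζ0 : ζinv 0 = 0 := by
        have h1 := hζinv 0 le_rfl
        have h2 : ζ (ζinv 0) = ζ 0 := by rw [h1.2, hζ.2.2]
        exact hζ.1.injOn (Set.mem_Ici.2 h1.1) (Set.mem_Ici.2 le_rfl) h2
      have : x = 0 := by
        have := (hκ x hx0.le).2.1
        rw [hκx0, hκinv 0 le_rfl, hζ0, zero_mul] at this
        exact this.symm
      linarith
    · exact h
  -- key monotonicity: for y ≥ a, x * y ≤ ϑ y * a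
  have hkey : ∀ y : ℝ, a ≤ y → x * y ≤ ϑ y * a := by
    intro y hay
    have hy0 : 0 ≤ y := le_trans ha0 hay
    have hmono : ζinv (ψ a / a) ≤ ζinv (ψ y / y) := by
      refine hζinvmono _ _ (hptnn a ha0) ?_
      rcases eq_or_lt_of_le hay with h | h
      · rw [h]
      · exact (htψ (Set.mem_Ici.2 ha0) (Set.mem_Ici.2 hy0) h).le
    have hxa : x = ζinv (ψ a / a) * a := by rw [← hϑform a ha0, hϑa]
    rw [hϑform y hy0, hxa]
    nlinarith [mul_nonneg ha0 hy0, (hζinv _ (hptnn a ha0)).1]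
  -- index element for invE: s = 2x/a works
  have hLeg2 : ENNReal.ofReal x ≤ Leg ϑ (2 * x / a) := by
    refine le_trans ?_ (le_iSup _ (⟨a, ha0⟩ : {y : ℝ // 0 ≤ y}))
    apply ENNReal.ofReal_le_ofReal
    rw [hϑa]
    have : 2 * x / a * a = 2 * x := div_mul_cancel₀ _ (ne_of_gt hapos)
    rw [this]; linarith
  have hsnn : (0:ℝ) ≤ 2 * x / a := div_nonneg (by linarith) ha0
  constructor
  · -- lower bound with K = 1
    have hle : ∀ s : ℝ, 0 ≤ s → ENNReal.ofReal x ≤ Leg ϑ s → x ≤ s * a := by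
      intro s hs0 hsle
      by_contra h
      push_neg at h
      have hLegle : Leg ϑ s ≤ ENNReal.ofReal (s * a) := by
        refine iSup_le fun ⟨y, hy⟩ => ENNReal.ofReal_le_ofReal ?_
        rcases le_total y a with hya | hay
        · have := hϑnn y hy
          nlinarith
        · have h1 := hkey y hay
          have hy0 : (0:ℝ) < y := lt_of_lt_of_le hapos hay
          nlinarith
      have : ENNReal.ofReal x ≤ ENNReal.ofReal (s * a) := le_trans hsle hLegle
      rw [ENNReal.ofReal_le_ofReal_iff (mul_nonneg hs0 ha0)] at this
      linarith
    rw [inv_one, one_mul]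
    have hdiv : ENNReal.ofReal x / ENNReal.ofReal a ≤
        invE (Leg ϑ) (ENNReal.ofReal x) := by
      refine le_iInf fun ⟨s, hs0, hsle⟩ => ?_
      refine ENNReal.div_le_of_le_mul ?_
      rw [← ENNReal.ofReal_mul hs0]
      exact ENNReal.ofReal_le_ofReal (hle s hs0 hsle)
    calc ENNReal.ofReal x
        = ENNReal.ofReal x / ENNReal.ofReal a * ENNReal.ofReal a := by
          rw [ENNReal.div_mul_cancel (by simpa using hapos) ENNReal.ofReal_ne_top]
      _ ≤ invE (Leg ϑ) (ENNReal.ofReal x) * ENNReal.ofReal a :=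
          mul_le_mul_left hdiv _
  · -- upper bound
    have hinvle : invE (Leg ϑ) (ENNReal.ofReal x) ≤ ENNReal.ofReal (2 * x / a) :=
      iInf_le _ (⟨2 * x / a, hsnn, hLeg2⟩ :
        {s : ℝ // 0 ≤ s ∧ ENNReal.ofReal x ≤ Leg ϑ s})
    calc invE (Leg ϑ) (ENNReal.ofReal x) * ENNReal.ofReal a
        ≤ ENNReal.ofReal (2 * x / a) * ENNReal.ofReal a :=
          mul_le_mul_left hinvle _
      _ = ENNReal.ofReal (2 * x) := by
          rw [← ENNReal.ofReal_mul hsnn, div_mul_cancel₀ _ (ne_of_gt hapos)]
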